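/- Define the formal generating function 𝒫(y,x;n) = Σ_{ν=0}^{n} (y^ν/ν!) 𝒫_ν(x;n) plus higher terms via the recursion extended for all ν ≥ 0. Then ∂𝒫/∂y(y,x;n) as a formal power series in y satisfies φ(x + y φ(x)) ∂𝒫/∂y = φ(x)[ψ(x + y φ(x)) + (n-1) φ'(x + y φ(x))] 𝒫(y,x;n), i.e., equivalently (1 + y φ'(x) + (1/2) y² φ'' φ(x)) ∂𝒫/∂y = [𝒫_1(x;n) + y φ(x) 𝒫_1'(x;n)] 𝒫(y,x;n). -/

import Mathlib

open Polynomial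

noncomputable def compP (φ ψ : Polynomial ℝ) (n : ℕ) : ℕ → Polynomial ℝ
  | 0 => 1
  | ν + 1 => φ * Polynomial.derivative (compP φ ψ n ν)
      + (ψ + Polynomial.C ((n : ℝ) - ν - 1) * Polynomial.derivative φ) * compP φ ψ n ν

/-- The generating function `𝒫(y,x;n) = Σ_ν y^ν 𝒫_ν(x;n)/ν!` as a formal power
series in `y` with polynomial coefficients in `x`. -/
noncomputable def genF (φ ψ : Polynomial ℝ) (n : ℕ) : PowerSeries (Polynomial ℝ) :=
  PowerSeries.mk fun ν => (1 / ((Nat.factorial ν : ℝ))) • compP φ ψ n ν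

/-- Formal derivative `∂/∂y` of a power series in `y`. -/
noncomputable def psDeriv (f : PowerSeries (Polynomial ℝ)) : PowerSeries (Polynomial ℝ) :=
  PowerSeries.mk fun ν => ((ν : ℝ) + 1) • PowerSeries.coeff (ν + 1) f

lemma compP_zero (φ ψ : Polynomial ℝ) (n : ℕ) : compP φ ψ n 0 = 1 := rfl

lemma compP_succ (φ ψ : Polynomial ℝ) (n ν : ℕ) :
    compP φ ψ n (ν+1) = φ * derivative (compP φ ψ n ν)
      + (ψ + Polynomial.C ((n : ℝ) - (ν:ℝ) - 1) * derivative φ) * compP φ ψ n ν := rfl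

lemma compP_deriv (φ ψ : Polynomial ℝ)
    (hψ2 : derivative (derivative ψ) = 0)
    (hφ3 : derivative (derivative (derivative φ)) = 0) (n : ℕ) :
    ∀ ν : ℕ, derivative (compP φ ψ n (ν+1))
      = (Polynomial.C ((ν:ℝ)+1) * derivative ψ
          + Polynomial.C ((((ν:ℝ)+1)*n) - ((ν:ℝ)+1)*((ν:ℝ)+2)/2) * derivative (derivative φ))
        * compP φ ψ n ν := by
  intro ν
  induction ν with
  | zero =>
      rw [compP_succ]
      show Polynomial.derivative (φ * Polynomial.derivative (1:Polynomial ℝ) + _ * (1:Polynomial ℝ)) = _ * (1:Polynomial ℝ)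
      simp only [derivative_one, mul_zero, zero_add, mul_one, derivative_add,
        derivative_mul, Polynomial.derivative_C, zero_mul, Nat.cast_zero]
      norm_num
  | succ k ih =>
      rw [compP_succ φ ψ n (k+1)]
      simp only [derivative_add, derivative_mul, Polynomial.derivative_C, hψ2, hφ3, zero_mul,
        mul_zero, add_zero, zero_add, ih]
      rw [compP_succ φ ψ n k]
      push_cast
      have e1 : Polynomial.C ((n:ℝ) - ((k:ℝ)+1) - 1) = Polynomial.C ((n:ℝ) - (k:ℝ) - 1) - 1 := by
        rw [← Polynomial.C_1, ← C_sub]; congr 1; ring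
      have e2 : Polynomial.C (((k:ℝ)+1)+1) = Polynomial.C ((k:ℝ)+1) + 1 := by
        rw [← Polynomial.C_1, ← C_add]
      have e3 : Polynomial.C (((k:ℝ)+1+1)*(n:ℝ) - ((k:ℝ)+1+1)*((k:ℝ)+1+2)/2)
          = Polynomial.C (((k:ℝ)+1)*(n:ℝ) - ((k:ℝ)+1)*((k:ℝ)+2)/2)
            + Polynomial.C ((n:ℝ) - (k:ℝ) - 1) - 1 := by
        rw [← Polynomial.C_1, ← C_add, ← C_sub]; congr 1; ring
      rw [e1, e2, e3]
      ring

lemma compP_one (φ ψ : Polynomial ℝ) (n : ℕ) :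
    compP φ ψ n 1 = ψ + Polynomial.C ((n:ℝ) - 1) * derivative φ := by
  rw [compP_succ, compP_zero]
  simp

lemma key1 (φ ψ : Polynomial ℝ)
    (hψ2 : derivative (derivative ψ) = 0)
    (hφ3 : derivative (derivative (derivative φ)) = 0) (n : ℕ) :
    compP φ ψ n 2 + derivative φ * compP φ ψ n 1
      = compP φ ψ n 1 * compP φ ψ n 1 + φ * derivative (compP φ ψ n 1) := by
  have h2 : compP φ ψ n 2 = φ * derivative (compP φ ψ n 1)
      + (ψ + Polynomial.C ((n:ℝ) - 1 - 1) * derivative φ) * compP φ ψ n 1 := by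
    have := compP_succ φ ψ n 1
    push_cast at this
    exact this
  rw [h2, compP_one]
  have e1 : Polynomial.C ((n:ℝ) - 1 - 1) = Polynomial.C ((n:ℝ) - 1) - 1 := by
    rw [← Polynomial.C_1, ← C_sub]
  rw [e1]
  ring

lemma key2 (φ ψ : Polynomial ℝ)
    (hψ2 : derivative (derivative ψ) = 0)
    (hφ3 : derivative (derivative (derivative φ)) = 0) (n m : ℕ) :
    compP φ ψ n (m+3) + Polynomial.C ((m:ℝ)+2) * derivative φ * compP φ ψ n (m+2)
      + Polynomial.C (((m:ℝ)+2)*((m:ℝ)+1)/2) * derivative (derivative φ) * φ * compP φ ψ n (m+1)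
    = compP φ ψ n 1 * compP φ ψ n (m+2)
      + Polynomial.C ((m:ℝ)+2) * φ * derivative (compP φ ψ n 1) * compP φ ψ n (m+1) := by
  have h3 : compP φ ψ n (m+3) = φ * derivative (compP φ ψ n (m+2))
      + (ψ + Polynomial.C ((n:ℝ) - ((m:ℝ)+2) - 1) * derivative φ) * compP φ ψ n (m+2) := by
    have := compP_succ φ ψ n (m+2)
    push_cast at this
    convert this using 2
  have hd : derivative (compP φ ψ n (m+2))
      = (Polynomial.C ((m:ℝ)+2) * derivative ψ
          + Polynomial.C ((((m:ℝ)+2)*n) - ((m:ℝ)+2)*((m:ℝ)+3)/2) * derivative (derivative φ))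
        * compP φ ψ n (m+1) := by
    have := compP_deriv φ ψ hψ2 hφ3 n (m+1)
    push_cast at this
    convert this using 3 <;> push_cast <;> ring
  have hd1 : derivative (compP φ ψ n 1) = derivative ψ + Polynomial.C ((n:ℝ) - 1) * derivative (derivative φ) := by
    rw [compP_one]
    simp [derivative_add, derivative_mul]
  rw [h3, hd, hd1, compP_one]
  have e1 : Polynomial.C ((n:ℝ) - ((m:ℝ)+2) - 1)
      = Polynomial.C ((n:ℝ) - 1) - Polynomial.C ((m:ℝ)+2) := by
    rw [← C_sub]; congr 1; ring
  have e2 : Polynomial.C ((((m:ℝ)+2)*n) - ((m:ℝ)+2)*((m:ℝ)+3)/2)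
      = Polynomial.C ((m:ℝ)+2) * Polynomial.C ((n:ℝ) - 1)
        - Polynomial.C (((m:ℝ)+2)*((m:ℝ)+1)/2) := by
    rw [← C_mul, ← C_sub]; congr 1; ring
  rw [e1, e2]
  ring

lemma deriv2_eq_zero (p : Polynomial ℝ) (h : p.natDegree ≤ 1) :
    derivative (derivative p) = 0 := by
  have h1 : (derivative p).natDegree ≤ 0 := by
    have := Polynomial.natDegree_derivative_le p
    omega
  rw [Polynomial.eq_C_of_natDegree_le_zero h1, Polynomial.derivative_C]

lemma coeff_psDeriv_genF (φ ψ : Polynomial ℝ) (n m : ℕ) :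
    PowerSeries.coeff m (psDeriv (genF φ ψ n))
      = (1 / ((Nat.factorial m : ℝ))) • compP φ ψ n (m+1) := by
  simp only [psDeriv, genF, PowerSeries.coeff_mk, smul_smul]
  congr 1
  rw [Nat.factorial_succ]
  have h1 : ((m+1).factorial : ℝ) ≠ 0 := by positivity
  push_cast
  field_simp

/-- the generating function satisfies the formal PDE
`(1 + y φ'(x) + ½ y² φ'' φ(x)) ∂𝒫/∂y = (𝒫₁(x;n) + y φ(x) 𝒫₁'(x;n)) 𝒫(y,x;n)`. -/
theorem stmt_11 (φ ψ : Polynomial ℝ) (hφ : φ.natDegree ≤ 2) (hψ : ψ.degree = 1) (n : ℕ) :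
    (1 + PowerSeries.X * PowerSeries.C (Polynomial.derivative φ)
        + PowerSeries.X ^ 2
            * PowerSeries.C (Polynomial.C (1 / 2 : ℝ) * Polynomial.derivative (Polynomial.derivative φ) * φ))
        * psDeriv (genF φ ψ n)
      = (PowerSeries.C (compP φ ψ n 1)
          + PowerSeries.X * PowerSeries.C (φ * Polynomial.derivative (compP φ ψ n 1)))
        * genF φ ψ n := by
  have hψn : ψ.natDegree ≤ 1 := le_of_eq (Polynomial.natDegree_eq_of_degree_eq_some hψ)
  have hψ2 : derivative (derivative ψ) = 0 := deriv2_eq_zero ψ hψn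
  have hφ3 : derivative (derivative (derivative φ)) = 0 := by
    have h1 : (derivative φ).natDegree ≤ 1 := by
      have := Polynomial.natDegree_derivative_le φ
      omega
    exact deriv2_eq_zero _ h1
  have hL : (1 + PowerSeries.X * PowerSeries.C (derivative φ)
        + PowerSeries.X ^ 2
            * PowerSeries.C (C (1 / 2 : ℝ) * derivative (derivative φ) * φ))
        * psDeriv (genF φ ψ n)
      = psDeriv (genF φ ψ n)
          + PowerSeries.X * (PowerSeries.C (derivative φ) * psDeriv (genF φ ψ n))
          + PowerSeries.X ^ 2 * (PowerSeries.C
              (C (1 / 2 : ℝ) * derivative (derivative φ) * φ) * psDeriv (genF φ ψ n)) := by ring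
  have hR : (PowerSeries.C (compP φ ψ n 1)
          + PowerSeries.X * PowerSeries.C (φ * derivative (compP φ ψ n 1)))
        * genF φ ψ n
      = PowerSeries.C (compP φ ψ n 1) * genF φ ψ n
          + PowerSeries.X * (PowerSeries.C
              (φ * derivative (compP φ ψ n 1)) * genF φ ψ n) := by
    ring
  rw [hL, hR]
  refine PowerSeries.ext fun ν => ?_
  have hGc : ∀ m : ℕ, PowerSeries.coeff m (genF φ ψ n)
      = (1 / ((Nat.factorial m : ℝ))) • compP φ ψ n m := by
    intro m; simp [genF]
  match ν with
  | 0 =>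
      rw [show ((PowerSeries.X : PowerSeries (Polynomial ℝ))^2 * (PowerSeries.C
              (C (1 / 2 : ℝ) * derivative (derivative φ) * φ) * psDeriv (genF φ ψ n)))
          = PowerSeries.X * (PowerSeries.X * (PowerSeries.C
              (C (1 / 2 : ℝ) * derivative (derivative φ) * φ) * psDeriv (genF φ ψ n))) from by ring]
      simp only [map_add, PowerSeries.coeff_zero_X_mul, PowerSeries.coeff_C_mul,
        coeff_psDeriv_genF, hGc, compP_zero]
      norm_num
  | 1 =>
      simp only [map_add, PowerSeries.coeff_succ_X_mul]
      rw [PowerSeries.coeff_X_pow_mul' _ 2 1]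
      simp only [PowerSeries.coeff_C_mul, coeff_psDeriv_genF, hGc, compP_zero]
      norm_num [Polynomial.smul_eq_C_mul]
      have := key1 φ ψ hψ2 hφ3 n
      linear_combination this
  | (m+2) =>
      simp only [map_add, PowerSeries.coeff_succ_X_mul]
      rw [PowerSeries.coeff_X_pow_mul _ 2 m]
      simp only [PowerSeries.coeff_C_mul, coeff_psDeriv_genF, hGc]
      simp only [Polynomial.smul_eq_C_mul]
      have hkey := key2 φ ψ hψ2 hφ3 n m
      have c1 : Polynomial.C (1 / ((Nat.factorial (m+1) : ℝ)))
          = Polynomial.C ((m:ℝ)+2) * Polynomial.C (1 / ((Nat.factorial (m+2) : ℝ))) := by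
        rw [← C_mul]; congr 1
        rw [Nat.factorial_succ (m+1)]
        have hf1 : ((m+1).factorial : ℝ) ≠ 0 := by positivity
        push_cast
        field_simp
        ring
      have c2 : Polynomial.C ((1:ℝ)/2) * Polynomial.C (1 / ((Nat.factorial m : ℝ)))
          = Polynomial.C (((m:ℝ)+2)*((m:ℝ)+1)/2)
            * Polynomial.C (1 / ((Nat.factorial (m+2) : ℝ))) := by
        rw [← C_mul, ← C_mul]; congr 1
        rw [Nat.factorial_succ (m+1), Nat.factorial_succ m]
        have hf0 : ((m).factorial : ℝ) ≠ 0 := by positivity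
        push_cast
        field_simp
        ring
      have h32 : compP φ ψ n (m+2+1) = compP φ ψ n (m+3) := by norm_num
      rw [h32]
      linear_combination Polynomial.C (1 / ((Nat.factorial (m+2) : ℝ))) * hkey
        + derivative φ * compP φ ψ n (m+2) * c1
        + derivative (derivative φ) * φ * compP φ ψ n (m+1) * c2
        - φ * derivative (compP φ ψ n 1) * compP φ ψ n (m+1) * c1
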